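/- Uniqueness up to sign of the osculating Möbius transformation: let x ∈ ℂ, and let (a, b, c, d) and (a', b', c', d') be quadruples of complex numbers with a·d − b·c = 1, a'·d' − b'·c' = 1, c·x + d ≠ 0 and c'·x + d' ≠ 0. Set g(z) = (a·z + b)/(c·z + d) and g̃(z) = (a'·z + b')/(c'·z + d'). If g(x) = g̃(x), deriv g x = deriv g̃ x, and deriv (deriv g) x = deriv (deriv g̃) x, then (a', b', c', d') = (a, b, c, d) or (a', b', c', d') = (−a, −b, −c, −d). -/

import Mathlib

open Filter Topology

lemma moeb_hasDeriv (a b c d z : ℂ) (hz : c * z + d ≠ 0) :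
    HasDerivAt (fun z : ℂ => (a * z + b) / (c * z + d))
      ((a * d - b * c) / (c * z + d) ^ 2) z := by
  have h := (((hasDerivAt_id z).const_mul a).add_const b).div
    (((hasDerivAt_id z).const_mul c).add_const d) hz
  refine h.congr_deriv ?_
  simp only [id_eq]
  field_simp
  ring

lemma moeb_deriv (a b c d z : ℂ) (hdet : a * d - b * c = 1) (hz : c * z + d ≠ 0) :
    deriv (fun z : ℂ => (a * z + b) / (c * z + d)) z = 1 / (c * z + d) ^ 2 := by
  rw [(moeb_hasDeriv a b c d z hz).deriv, hdet]

lemma moeb_deriv2 (a b c d x : ℂ) (hdet : a * d - b * c = 1) (hx : c * x + d ≠ 0) :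
    deriv (deriv (fun z : ℂ => (a * z + b) / (c * z + d))) x
      = (-2 * c) / (c * x + d) ^ 3 := by
  have hcont : ContinuousAt (fun z : ℂ => c * z + d) x := by fun_prop
  have hev : ∀ᶠ z in 𝓝 x, c * z + d ≠ 0 := hcont.eventually_ne hx
  have heq : deriv (fun z : ℂ => (a * z + b) / (c * z + d))
      =ᶠ[𝓝 x] fun z => 1 / (c * z + d) ^ 2 := by
    filter_upwards [hev] with z hz using moeb_deriv a b c d z hdet hz
  rw [heq.deriv_eq]
  have hd : HasDerivAt (fun z : ℂ => (c * z + d) ^ 2) (2 * c * (c * x + d)) x := by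
    have h := (((hasDerivAt_id x).const_mul c).add_const d).pow 2
    refine h.congr_deriv ?_
    simp only [id_eq]
    ring
  have h2 := (hasDerivAt_const x (1 : ℂ)).div hd (pow_ne_zero 2 hx)
  rw [show deriv (fun z : ℂ => 1 / (c * z + d) ^ 2) x = _ from h2.deriv]
  field_simp
  ring

/-- Uniqueness up to sign of the osculating Möbius transformation: two unit
determinant Möbius transformations with the same 2-jet at a point `x` have
coefficient quadruples that agree up to an overall sign. -/
theorem osculating_moebius_unique (x a b c d a' b' c' d' : ℂ)
    (hdet : a * d - b * c = 1) (hdet' : a' * d' - b' * c' = 1)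
    (hden : c * x + d ≠ 0) (hden' : c' * x + d' ≠ 0)
    (h0 : (fun z : ℂ => (a * z + b) / (c * z + d)) x =
          (fun z : ℂ => (a' * z + b') / (c' * z + d')) x)
    (h1 : deriv (fun z : ℂ => (a * z + b) / (c * z + d)) x =
          deriv (fun z : ℂ => (a' * z + b') / (c' * z + d')) x)
    (h2 : deriv (deriv (fun z : ℂ => (a * z + b) / (c * z + d))) x =
          deriv (deriv (fun z : ℂ => (a' * z + b') / (c' * z + d'))) x) :
    (a', b', c', d') = (a, b, c, d) ∨ (a', b', c', d') = (-a, -b, -c, -d) := by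
  simp only at h0
  rw [moeb_deriv a b c d x hdet hden, moeb_deriv a' b' c' d' x hdet' hden'] at h1
  rw [moeb_deriv2 a b c d x hdet hden, moeb_deriv2 a' b' c' d' x hdet' hden'] at h2
  rw [div_eq_div_iff hden hden'] at h0
  rw [div_eq_div_iff (pow_ne_zero 2 hden) (pow_ne_zero 2 hden')] at h1
  rw [div_eq_div_iff (pow_ne_zero 3 hden) (pow_ne_zero 3 hden')] at h2
  -- h1 : (c'*x+d')^2 = (c*x+d)^2
  have hpm : c' * x + d' = c * x + d ∨ c' * x + d' = -(c * x + d) := by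
    have hz : ((c' * x + d') - (c * x + d)) * ((c' * x + d') + (c * x + d)) = 0 := by
      linear_combination h1
    rcases mul_eq_zero.mp hz with h | h
    · exact Or.inl (sub_eq_zero.mp h)
    · exact Or.inr (eq_neg_of_add_eq_zero_left h)
  rcases hpm with hp | hp
  · -- same sign
    rw [hp] at h0 h2
    have hc : c' = c := by
      have h : (c' - c) * (c * x + d) ^ 3 = 0 := by linear_combination h2 / 2
      rcases mul_eq_zero.mp h with h | h
      · exact sub_eq_zero.mp h
      · exact absurd h (pow_ne_zero 3 hden)
    have hd : d' = d := by linear_combination hp - x * hc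
    have hE1 : a' * x + b' = a * x + b := (mul_right_cancel₀ hden h0).symm
    have ha : a' = a := by
      have h : (a' - a) * (c * x + d) = 0 := by
        linear_combination c * hE1 + hdet' - hdet - a' * hd + b' * hc
      rcases mul_eq_zero.mp h with h | h
      · exact sub_eq_zero.mp h
      · exact absurd h hden
    have hb : b' = b := by linear_combination hE1 - x * ha
    exact Or.inl (by rw [ha, hb, hc, hd])
  · -- opposite sign
    rw [hp] at h0 h2
    have hc : c' = -c := by
      have h : (c' + c) * (c * x + d) ^ 3 = 0 := by linear_combination h2 / 2
      rcases mul_eq_zero.mp h with h | h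
      · exact eq_neg_of_add_eq_zero_left h
      · exact absurd h (pow_ne_zero 3 hden)
    have hd : d' = -d := by linear_combination hp - x * hc
    have hE1 : a' * x + b' = -(a * x + b) := by
      have h : (a' * x + b') * (c * x + d) = (-(a * x + b)) * (c * x + d) := by
        linear_combination -h0
      exact mul_right_cancel₀ hden h
    have hdet2 : a' * d - b' * c = -1 := by
      linear_combination -hdet' + a' * hd - b' * hc
    have ha : a' = -a := by
      have h : (a' + a) * (c * x + d) = 0 := by
        linear_combination c * hE1 + hdet2 + hdet
      rcases mul_eq_zero.mp h with h | h
      · exact eq_neg_of_add_eq_zero_left h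
      · exact absurd h hden
    have hb : b' = -b := by linear_combination hE1 - x * ha
    exact Or.inr (by rw [ha, hb, hc, hd])
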